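/- Let R be a commutative ring without zero divisors in which 2 ≠ 0, with involution, and let G ⊆ R^× satisfy x̄ = x⁻¹ for x ∈ G. Fix units a₁,…,a_g, b₁,…,b_g ∈ G. Consider the 2g × 2g skew-Hermitian block matrix S = [[S_aa, S_ab],[S_ba, S_bb]] over R where, writing P(x,y) = (1−x)(1−ȳ) and Q(x,y) = (x+1)(ȳ+1) − 2: S_aa has diagonal entries ā_i − a_i, entries P(a_i,a_j) below the diagonal (i > j) and −P(a_i,a_j) above; S_ab has diagonal entries Q(a_i,b_i), entries P(a_i,b_j) for i > j and −P(a_i,b_j) for i < j; S_ba = −conj(S_ab)ᵗ; S_bb has diagonal entries b_i − b̄_i, entries P(b_i,b_j) for i > j and −P(b_i,b_j) for i < j. Then det(S) = 4^g. -/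

import Mathlib

open Matrix

namespace Stmt10Aux

variable {F : Type} [Field F]

variable (g : ℕ) (a b : Fin g → F)

/-- handle index -/
def hdl : Fin g ⊕ Fin g → Fin g := Sum.elim id id

/-- sign pattern: `1` on and below the diagonal, `-1` above -/
def sg (i j : Fin g) : F := if j ≤ i then 1 else -1

def uu : Fin g ⊕ Fin g → F := Sum.elim (fun i => 1 - a i) (fun i => 1 - b i)

def ww : Fin g ⊕ Fin g → F := Sum.elim (fun i => 1 - (a i)⁻¹) (fun i => 1 - (b i)⁻¹)

def vv : Fin g ⊕ Fin g → F := Sum.elim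
  (fun i => (b i - 1) * (1 - a i) - (a i + (b i)⁻¹ - 1) * (1 - b i))
  (fun i => (a i)⁻¹ * b i * (1 - a i) + ((a i)⁻¹ - 1) * (1 - b i))

def Kmat : Matrix (Fin g ⊕ Fin g) (Fin g ⊕ Fin g) F :=
  fromBlocks (diagonal fun i => (a i)⁻¹ - 1) (diagonal fun i => a i + (b i)⁻¹ - 1)
    (diagonal fun i => -((a i)⁻¹ * b i)) (diagonal fun i => b i - 1)

def Kinv : Matrix (Fin g ⊕ Fin g) (Fin g ⊕ Fin g) F :=
  fromBlocks (diagonal fun i => b i - 1) (diagonal fun i => -(a i + (b i)⁻¹ - 1))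
    (diagonal fun i => (a i)⁻¹ * b i) (diagonal fun i => (a i)⁻¹ - 1)

def Nmat : Matrix (Fin g ⊕ Fin g) (Fin g ⊕ Fin g) F :=
  Matrix.of fun p q => sg g (hdl g p) (hdl g q) * uu g a b p * ww g a b q

def Amat : Matrix (Fin g ⊕ Fin g) (Fin g) F :=
  Matrix.of fun p k => if hdl g p = k then vv g a b p else 0

def Bmat : Matrix (Fin g) (Fin g ⊕ Fin g) F :=
  Matrix.of fun k q => sg g k (hdl g q) * ww g a b q

def Smat : Matrix (Fin g ⊕ Fin g) (Fin g ⊕ Fin g) F :=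
  fromBlocks
    (Matrix.of fun i j => if i = j then (a i)⁻¹ - a i
      else if j < i then (1 - a i) * (1 - (a j)⁻¹) else -((1 - a i) * (1 - (a j)⁻¹)))
    (Matrix.of fun i j => if i = j then (a i + 1) * ((b i)⁻¹ + 1) - 2
      else if j < i then (1 - a i) * (1 - (b j)⁻¹) else -((1 - a i) * (1 - (b j)⁻¹)))
    (Matrix.of fun i j => if i = j then -(((a i)⁻¹ + 1) * (b i + 1) - 2)
      else if j < i then (1 - (a j)⁻¹) * (1 - b i) else -((1 - (a j)⁻¹) * (1 - b i)))
    (Matrix.of fun i j => if i = j then b i - (b i)⁻¹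
      else if j < i then (1 - b i) * (1 - (b j)⁻¹) else -((1 - b i) * (1 - (b j)⁻¹)))

variable {g a b}

lemma K_mul_Kinv (ha : ∀ i, a i ≠ 0) (hb : ∀ i, b i ≠ 0) :
    Kmat g a b * Kinv g a b = 1 := by
  ext p q
  cases p <;> cases q <;> rename_i i j <;>
  · rcases eq_or_ne i j with rfl | hij
    · simp [Kmat, Kinv, mul_apply, Fintype.sum_sum_type, diagonal_apply, one_apply,
        ite_mul, mul_ite]
      field_simp [ha i, hb i]
      ring
    · simp [Kmat, Kinv, mul_apply, Fintype.sum_sum_type, diagonal_apply, one_apply,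
        ite_mul, mul_ite, hij, hij.symm]
      try ring

lemma Kinv_mul_N : Kinv g a b * Nmat g a b = Amat g a b * Bmat g a b := by
  have hA : ∀ (i : Fin g) k, (Amat g a b (Sum.inl i) k = if i = k then vv g a b (Sum.inl i) else 0) ∧
      Amat g a b (Sum.inr i) k = if i = k then vv g a b (Sum.inr i) else 0 := fun _ _ => ⟨rfl, rfl⟩
  ext p q
  cases p <;> cases q <;>
    simp [Kinv, Nmat, hA, Bmat, mul_apply, Fintype.sum_sum_type, diagonal_apply,
      ite_mul, mul_ite, hdl, uu, ww, vv] <;> ring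

lemma B_mul_A (ha : ∀ i, a i ≠ 0) (hb : ∀ i, b i ≠ 0) :
    Bmat g a b * Amat g a b = 0 := by
  have hA : ∀ (i : Fin g) k, (Amat g a b (Sum.inl i) k = if i = k then vv g a b (Sum.inl i) else 0) ∧
      Amat g a b (Sum.inr i) k = if i = k then vv g a b (Sum.inr i) else 0 := fun _ _ => ⟨rfl, rfl⟩
  ext k l
  have key : ww g a b (Sum.inl l) * vv g a b (Sum.inl l)
      + ww g a b (Sum.inr l) * vv g a b (Sum.inr l) = 0 := by
    simp only [ww, vv, Sum.elim_inl, Sum.elim_inr]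
    field_simp [ha l, hb l]
    ring
  simp [Bmat, hA, mul_apply, Fintype.sum_sum_type, hdl, mul_ite, ite_mul]
  linear_combination sg g k l * key

lemma S_eq_two_K_add_N (ha : ∀ i, a i ≠ 0) (hb : ∀ i, b i ≠ 0) :
    Smat g a b = (2 : F) • Kmat g a b + Nmat g a b := by
  ext p q
  cases p <;> cases q <;> rename_i i j <;>
  · rcases eq_or_ne i j with rfl | hij
    · simp [Smat, Kmat, Nmat, hdl, sg, uu, ww, diagonal_apply, Matrix.smul_apply, smul_eq_mul]
      field_simp [ha i, hb i]
      ring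
    · rcases hij.lt_or_gt with h | h
      · simp [Smat, Kmat, Nmat, hdl, sg, uu, ww, diagonal_apply, Matrix.smul_apply, smul_eq_mul,
          hij, hij.symm, h, h.le, h.not_gt, not_le.mpr h]
        try ring
      · simp [Smat, Kmat, Nmat, hdl, sg, uu, ww, diagonal_apply, Matrix.smul_apply, smul_eq_mul,
          hij, hij.symm, h, h.le, h.not_gt, not_le.mpr h]
        try ring

def pairEquiv (g : ℕ) : Fin 2 × Fin g ≃ Fin g ⊕ Fin g where
  toFun p := if p.1 = 0 then Sum.inl p.2 else Sum.inr p.2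
  invFun := Sum.elim (fun i => (0, i)) (fun i => (1, i))
  left_inv := by rintro ⟨x, i⟩; fin_cases x <;> simp
  right_inv := by rintro (i | i) <;> simp

lemma det_Kmat (ha : ∀ i, a i ≠ 0) (hb : ∀ i, b i ≠ 0) :
    (Kmat g a b).det = 1 := by
  have hsub : (Kmat g a b).submatrix (pairEquiv g) (pairEquiv g) = blockDiagonal (fun i =>
      !![(a i)⁻¹ - 1, a i + (b i)⁻¹ - 1; -((a i)⁻¹ * b i), b i - 1]) := by
    ext ⟨x, i⟩ ⟨y, j⟩
    fin_cases x <;> fin_cases y <;>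
      simp [pairEquiv, Kmat, blockDiagonal_apply, diagonal_apply] <;>
      split_ifs <;> simp_all
  rw [← Matrix.det_submatrix_equiv_self (pairEquiv g), hsub, Matrix.det_blockDiagonal]
  have hone : ∀ i : Fin g, (!![(a i)⁻¹ - 1, a i + (b i)⁻¹ - 1;
      -((a i)⁻¹ * b i), b i - 1] : Matrix (Fin 2) (Fin 2) F).det = 1 := by
    intro i
    rw [Matrix.det_fin_two_of]
    field_simp [ha i, hb i]
    ring
  simp [hone]


lemma det_Smat (h2 : (2 : F) ≠ 0) (ha : ∀ i, a i ≠ 0) (hb : ∀ i, b i ≠ 0) :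
    (Smat g a b).det = 4 ^ g := by
  have hS : Smat g a b = Kmat g a b * ((2 : F) • 1 + Amat g a b * Bmat g a b) := by
    rw [Matrix.mul_add, mul_smul_comm, mul_one, ← Kinv_mul_N, ← Matrix.mul_assoc,
      K_mul_Kinv ha hb, Matrix.one_mul, S_eq_two_K_add_N ha hb]
  have h1 : (2 : F) • (1 + ((2 : F)⁻¹ • Amat g a b) * Bmat g a b)
      = (2 : F) • (1 : Matrix (Fin g ⊕ Fin g) (Fin g ⊕ Fin g) F) + Amat g a b * Bmat g a b := by
    rw [smul_add, Matrix.smul_mul, smul_smul, mul_inv_cancel₀ h2, one_smul]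
  have h3 : (1 + ((2 : F)⁻¹ • Amat g a b) * Bmat g a b).det = 1 := by
    rw [Matrix.det_one_add_mul_comm, Matrix.mul_smul, B_mul_A ha hb, smul_zero, add_zero,
      Matrix.det_one]
  rw [hS, Matrix.det_mul, det_Kmat ha hb, one_mul, ← h1, Matrix.det_smul, h3, mul_one]
  have hcard : Fintype.card (Fin g ⊕ Fin g) = g + g := by simp
  rw [hcard, pow_add]
  have h4 : (4 : F) = 2 * 2 := by norm_num
  rw [h4, mul_pow]

end Stmt10Aux

/-- the determinant of the matrix of the twisted intersection form of the
genus-`g` surface in the basis of meridians and parallels equals `4^g`. -/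
theorem stmt10 (R : Type) [CommRing R] [IsDomain R] (h2 : (2 : R) ≠ 0)
    (σ : R →+* R) (hσ : ∀ r, σ (σ r) = r)
    (G : Subgroup Rˣ) (hσG : ∀ u : Rˣ, u ∈ G → σ (u : R) = ((u⁻¹ : Rˣ) : R))
    (g : ℕ) (a b : Fin g → Rˣ) (ha : ∀ i, a i ∈ G) (hb : ∀ i, b i ∈ G) :
    let P : R → R → R := fun x y => (1 - x) * (1 - σ y)
    let Qf : R → R → R := fun x y => (x + 1) * (σ y + 1) - 2
    let Saa : Matrix (Fin g) (Fin g) R := Matrix.of fun i j =>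
      if i = j then σ (a i : R) - (a i : R)
      else if j < i then P (a i : R) (a j : R) else - P (a i : R) (a j : R)
    let Sab : Matrix (Fin g) (Fin g) R := Matrix.of fun i j =>
      if i = j then Qf (a i : R) (b i : R)
      else if j < i then P (a i : R) (b j : R) else - P (a i : R) (b j : R)
    let Sbb : Matrix (Fin g) (Fin g) R := Matrix.of fun i j =>
      if i = j then (b i : R) - σ (b i : R)
      else if j < i then P (b i : R) (b j : R) else - P (b i : R) (b j : R)
    let Sba : Matrix (Fin g) (Fin g) R := Matrix.of fun i j => - σ (Sab j i)
    (Matrix.fromBlocks Saa Sab Sba Sbb).det = 4 ^ g := by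
  intro P Qf Saa Sab Sbb Sba
  have hinj : Function.Injective (algebraMap R (FractionRing R)) :=
    IsFractionRing.injective R (FractionRing R)
  set φ : R →+* FractionRing R := algebraMap R (FractionRing R) with hφ
  have hαne : ∀ i, φ ((a i : R)) ≠ 0 := by
    intro i h
    exact (a i).ne_zero (hinj (by simpa using h))
  have hβne : ∀ i, φ ((b i : R)) ≠ 0 := by
    intro i h
    exact (b i).ne_zero (hinj (by simpa using h))
  have h2F : (2 : FractionRing R) ≠ 0 := by
    intro h
    apply h2
    apply hinj
    rw [map_ofNat, map_zero]
    exact h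
  have hσa : ∀ i, φ (σ (a i : R)) = (φ ((a i : R)))⁻¹ := by
    intro i
    rw [hσG _ (ha i)]
    refine eq_inv_of_mul_eq_one_left ?_
    rw [← _root_.map_mul, Units.inv_mul, _root_.map_one]
  have hσb : ∀ i, φ (σ (b i : R)) = (φ ((b i : R)))⁻¹ := by
    intro i
    rw [hσG _ (hb i)]
    refine eq_inv_of_mul_eq_one_left ?_
    rw [← _root_.map_mul, Units.inv_mul, _root_.map_one]
  apply hinj
  rw [RingHom.map_det, map_pow, map_ofNat]
  have hmap : (Matrix.fromBlocks Saa Sab Sba Sbb).map (⇑φ)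
      = Stmt10Aux.Smat g (fun i => φ ((a i : R))) (fun i => φ ((b i : R))) := by
    ext p q
    cases p <;> cases q <;> rename_i i j <;>
      simp only [Matrix.map_apply, Matrix.fromBlocks_apply₁₁, Matrix.fromBlocks_apply₁₂,
        Matrix.fromBlocks_apply₂₁, Matrix.fromBlocks_apply₂₂, Matrix.of_apply,
        Stmt10Aux.Smat, Saa, Sab, Sba, Sbb, P, Qf]
    · split_ifs <;>
        simp only [map_sub, map_neg, _root_.map_mul, map_add, _root_.map_one, map_ofNat,
          hσa, hσb, hσ]
    · split_ifs <;>
        simp only [map_sub, map_neg, _root_.map_mul, map_add, _root_.map_one, map_ofNat,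
          hσa, hσb, hσ]
    · rcases eq_or_ne i j with rfl | hij
      · rw [if_pos rfl, if_pos rfl]
        simp only [map_neg, map_sub, _root_.map_mul, map_add, _root_.map_one, map_ofNat,
          hσ, hσa, hσb]
      · rw [if_neg (Ne.symm hij), if_neg hij]
        rcases hij.lt_or_gt with h | h
        · rw [if_pos h, if_neg (not_lt.mpr h.le)]
          simp only [map_neg, map_sub, _root_.map_mul, _root_.map_one, hσ, hσa, hσb]
        · rw [if_neg (not_lt.mpr h.le), if_pos h]
          simp only [map_neg, map_sub, _root_.map_mul, _root_.map_one, hσ, hσa, hσb,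
            neg_neg]
    · split_ifs <;>
        simp only [map_sub, map_neg, _root_.map_mul, map_add, _root_.map_one, map_ofNat,
          hσa, hσb, hσ]
  rw [RingHom.mapMatrix_apply, hmap]
  exact Stmt10Aux.det_Smat h2F hαne hβne
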